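/- Let (μ_λ)_{λ∈Λ} be a measurable family of Borel regular outer measures on ℝ^n. For every Borel A ⊂ ℝ^n × Λ and every Borel B ⊂ ℝ^n: (1) 𝓘̂_m(A) = 0 if and only if μ_λ(A_λ) = 0 for L^l-a.e. λ ∈ Λ, where A_λ := {x ∈ ℝ^n : (x,λ) ∈ A}; (2) 𝓘^m_1(B) = 0 if and only if μ_λ(B) = 0 for L^l-a.e. λ ∈ Λ; (3) for every p ∈ [1,∞], 𝓘^m_1(B) = 0 if and only if 𝓘^m_p(B) = 0. -/

import Mathlib

open MeasureTheory Metric Set Filter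
open scoped ENNReal NNReal Topology

noncomputable section

abbrev Euc (n : ℕ) : Type := EuclideanSpace ℝ (Fin n)

namespace Slicing

variable {n m l : ℕ}

/-- The map `T_{x x'}(λ) = (P_λ(x) - P_λ(x'))/|x - x'|`. -/
def transMap (P : Euc n → Euc l → Euc m) (x x' : Euc n) (lam : Euc l) : Euc m :=
  ‖x - x'‖⁻¹ • (P x lam - P x' lam)

/-- The `m`-dimensional Jacobian `J D = √det(D ∘ Dᵀ)` of a linear map `D : ℝˡ → ℝᵐ`. -/
def jacobian (D : Euc l →L[ℝ] Euc m) : ℝ :=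
  Real.sqrt (LinearMap.det
    ((D.comp (ContinuousLinearMap.adjoint D) : Euc m →L[ℝ] Euc m) : Euc m →ₗ[ℝ] Euc m))

/-- A transversal family of maps `(P_λ)_{λ ∈ Λ}` in the sense of Definition 3.4. -/
structure IsTransversalFamily (Λ : Set (Euc l)) (P : Euc n → Euc l → Euc m) : Prop where
  isOpen : IsOpen Λ
  isBounded : Bornology.IsBounded Λ
  continuousOn : ContinuousOn (fun q : Euc n × Euc l => P q.1 q.2) (Set.univ ×ˢ Λ)
  contDiffOn : ∀ x : Euc n, ContDiffOn ℝ 2 (P x) Λ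
  derivBound : ∀ j : ℕ, j = 1 ∨ j = 2 → ∃ C : ℝ, ∀ x : Euc n, ∀ lam ∈ Λ,
    ‖iteratedFDeriv ℝ j (P x) lam‖ ≤ C
  transversality : ∃ C' : ℝ, 0 < C' ∧ ∀ x x' : Euc n, x ≠ x' → ∀ lam ∈ Λ,
    ‖transMap P x x' lam‖ ≤ C' → C' ≤ jacobian (fderiv ℝ (transMap P x x') lam)
  transDerivBound : ∃ C'' : ℝ, ∀ x x' : Euc n, x ≠ x' → ∀ lam ∈ Λ,
    ‖fderiv ℝ (transMap P x x') lam‖ ≤ C'' ∧ ‖iteratedFDeriv ℝ 2 (transMap P x x') lam‖ ≤ C''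

/-- The cone `X(a,λ,s)`. -/
def coneX (P : Euc n → Euc l → Euc m) (a : Euc n) (lam : Euc l) (s : ℝ) : Set (Euc n) :=
  {x | ‖P x lam - P a lam‖ < s * ‖x - a‖}

/-- The truncated cone `X(a,r,λ,s)`. -/
def coneXr (P : Euc n → Euc l → Euc m) (a : Euc n) (r : ℝ) (lam : Euc l) (s : ℝ) :
    Set (Euc n) :=
  coneX P a lam s ∩ closedBall a r

/-- The cone `L_V(a,λ,s)`. -/
def coneL (P : Euc n → Euc l → Euc m) (V : Submodule ℝ (Euc l)) (a : Euc n) (lam : Euc l)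
    (s : ℝ) : Set (Euc n) :=
  {x | ∃ lam' : Euc l, P x lam' = P a lam' ∧ ‖lam' - lam‖ < s ∧ lam' - lam ∈ V}

/-- `V` is an `m`-dimensional coordinate plane of `ℝˡ`. -/
def IsCoordPlane (m : ℕ) (V : Submodule ℝ (Euc l)) : Prop :=
  ∃ I : Finset (Fin l), I.card = m ∧
    V = Submodule.span ℝ {v : Euc l | ∃ i ∈ I, v = EuclideanSpace.single i (1 : ℝ)}

/-- A countably `m`-rectifiable subset of `ℝⁿ`. -/
def CountablyRectifiable (m : ℕ) (R : Set (Euc n)) : Prop :=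
  ∃ (E : ℕ → Set (Euc m)) (f : ℕ → Euc m → Euc n),
    (∀ i, Bornology.IsBounded (E i)) ∧
    (∀ i, ∃ K : ℝ≥0, LipschitzOnWith K (f i) (E i)) ∧
    R = ⋃ i, f i '' E i

/-- An `m`-rectifiable measure: `μ = θ · (H^m ⌊ R)`. -/
def IsRectifiableMeasure (m : ℕ) (μ : Measure (Euc n)) : Prop :=
  ∃ (R : Set (Euc n)) (θ : Euc n → ℝ), CountablyRectifiable m R ∧ Measurable θ ∧
    μ = (μH[(m : ℝ)].restrict R).withDensity (fun x => ENNReal.ofReal (θ x))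

/-- `S` is an `m`-dimensional `C¹` submanifold of `ℝⁿ`. -/
def IsC1Submanifold (m : ℕ) (S : Set (Euc n)) : Prop :=
  ∀ x ∈ S, ∃ (U : Set (Euc n)) (V : Set (Euc m)) (f : Euc m → Euc n),
    IsOpen U ∧ x ∈ U ∧ IsOpen V ∧ ContDiffOn ℝ 1 f V ∧ Set.InjOn f V ∧
    (∀ y ∈ V, Function.Injective (fderivWithin ℝ f V y)) ∧ S ∩ U = f '' V

/-- `E` is purely `(φ,m)`-unrectifiable. -/
def PurelyUnrectifiable (m : ℕ) (φ : Measure (Euc n)) (E : Set (Euc n)) : Prop :=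
  ∀ S : Set (Euc n), IsC1Submanifold m S → φ (S ∩ E) = 0

/-- `A` is countably `(φ,m)`-rectifiable. -/
def CountablyRectifiableWrt (m : ℕ) (φ : Measure (Euc n)) (A : Set (Euc n)) : Prop :=
  ∃ R : Set (Euc n), CountablyRectifiable m R ∧ φ (A \ R) = 0

/-- Carathéodory's construction from a set function `ζ`, using countable Borel coverings. -/
def carath {X : Type*} [EMetricSpace X] [MeasurableSpace X] (ζ : Set X → ℝ≥0∞) (E : Set X) :
    ℝ≥0∞ :=
  ⨆ (δ : ℝ≥0∞) (_ : 0 < δ), ⨅ (G : ℕ → Set X) (_ : ∀ i, MeasurableSet (G i))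
    (_ : E ⊆ ⋃ i, G i) (_ : ∀ i, EMetric.diam (G i) ≤ δ), ∑' i, ζ (G i)

/-- `L^p` norm of an `ℝ≥0∞`-valued function. -/
def lpNormENN {α : Type*} [MeasurableSpace α] (ν : Measure α) (p : ℝ≥0∞) (f : α → ℝ≥0∞) :
    ℝ≥0∞ :=
  if p = ∞ then essSup f ν else (∫⁻ a, f a ^ p.toReal ∂ν) ^ (1 / p.toReal)

/-- The set function `ζ_p(B) = ‖λ ↦ μ_λ(B)‖_{L^p(Λ)}`. -/
def zetaP (Λ : Set (Euc l)) (μ : Euc l → Measure (Euc n)) (p : ℝ≥0∞) (B : Set (Euc n)) :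
    ℝ≥0∞ :=
  lpNormENN (volume.restrict Λ) p (fun lam => μ lam B)

/-- The measure `𝓘^m_p` obtained from `ζ_p` via Carathéodory's construction. -/
def genIGMeasure (Λ : Set (Euc l)) (μ : Euc l → Measure (Euc n)) (p : ℝ≥0∞) :
    Set (Euc n) → ℝ≥0∞ :=
  carath (zetaP Λ μ p)

/-- Upper Lebesgue integral. -/
def upperLintegral {α : Type*} [MeasurableSpace α] (ν : Measure α) (f : α → ℝ≥0∞) : ℝ≥0∞ :=
  ⨅ (g : α → ℝ≥0∞) (_ : Measurable g) (_ : ∀ a, f a ≤ g a), ∫⁻ a, g a ∂ν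

/-- The set function `ζ̂(B') = ∫*_Λ μ_λ(B'_λ) dλ`. -/
def zetaHat (Λ : Set (Euc l)) (μ : Euc l → Measure (Euc n)) (B' : Set (Euc n × Euc l)) :
    ℝ≥0∞ :=
  upperLintegral (volume.restrict Λ) (fun lam => μ lam {x | (x, lam) ∈ B'})

/-- The measure `𝓘̂_m` on the product, obtained from `ζ̂` via Carathéodory's construction. -/
def hatIG (Λ : Set (Euc l)) (μ : Euc l → Measure (Euc n)) : Set (Euc n × Euc l) → ℝ≥0∞ :=
  carath (zetaHat Λ μ)

/-- A measurable family of (Borel regular outer) measures. -/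
def MeasurableFamily (Λ : Set (Euc l)) (μ : Euc l → Measure (Euc n)) : Prop :=
  ∀ B : Set (Euc n), MeasurableSet B → AEMeasurable (fun lam => μ lam B) (volume.restrict Λ)

/-- `𝓘^m_p` is an integralgeometric measure (Definition 4.1). -/
def IsIntegralgeometric (Λ : Set (Euc l)) (P : Euc n → Euc l → Euc m)
    (μ : Euc l → Measure (Euc n)) : Prop :=
  (∀ᵐ lam ∂(volume.restrict Λ), (μ lam).map (fun x => P x lam) ≪ volume) ∧
  ∃ E : Set (Euc n), MeasurableSet E ∧
    (∀ᵐ lam ∂(volume.restrict Λ), μ lam Eᶜ = 0) ∧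
    (∀ᵐ lam ∂(volume.restrict Λ), ∀ᵐ y ∂((μ lam).map (fun x => P x lam)),
      (E ∩ (fun x => P x lam) ⁻¹' {y}).Finite)

/-- A disintegration `ν = η_y ⊗ Q_♯ν`. -/
def IsDisintegration {X Y : Type*} [MeasurableSpace X] [MeasurableSpace Y] (ν : Measure X)
    (Q : X → Y) (η : Y → Measure X) : Prop :=
  (∀ y, IsProbabilityMeasure (η y)) ∧
  (∀ᵐ y ∂(ν.map Q), η y (Q ⁻¹' {y})ᶜ = 0) ∧
  (∀ B : Set X, MeasurableSet B → Measurable fun y => η y B) ∧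
  (∀ B : Set X, MeasurableSet B → ν B = ∫⁻ y, η y B ∂(ν.map Q))

/-- A `0`-rectifiable measure (a countable sum of nonnegative point masses). -/
def ZeroRectifiable {X : Type*} [MeasurableSpace X] (ν : Measure X) : Prop :=
  ∃ R : Set X, R.Countable ∧ ν Rᶜ = 0

/-- A measure supported on a finite set. -/
def FinitelySupported {X : Type*} [MeasurableSpace X] (ν : Measure X) : Prop :=
  ∃ F : Set X, F.Finite ∧ ν Fᶜ = 0

/-- `ω(m)`, the Lebesgue measure of the unit ball of `ℝᵐ`. -/
def omegaBall (m : ℕ) : ℝ := (volume (Metric.ball (0 : Euc m) 1)).toReal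

/-- The `m`-dimensional upper density `Θ^{*m}(ν, a)`. -/
def upperDensity (m : ℕ) (ν : Measure (Euc n)) (a : Euc n) : ℝ≥0∞ :=
  Filter.limsup
    (fun r : ℝ => ν (closedBall a r) / ENNReal.ofReal (omegaBall m * r ^ m)) (𝓝[>] 0)

/-- `sup_{0<r<δ} (rs)^{-m} φ(E ∩ X(a,r,λ,s))`, then `limsup` as `s → 0⁺`. -/
def coneDensity (P : Euc n → Euc l → Euc m) (φ : Measure (Euc n)) (E : Set (Euc n))
    (a : Euc n) (lam : Euc l) (δ : ℝ) : ℝ≥0∞ :=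
  Filter.limsup (fun s : ℝ =>
    ⨆ (r : ℝ) (_ : r ∈ Set.Ioo (0 : ℝ) δ),
      φ (E ∩ coneXr P a r lam s) / ENNReal.ofReal ((r * s) ^ m)) (𝓝[>] 0)



/-- The Grassmannian of `m`-dimensional linear subspaces of `ℝⁿ`. -/
def Grassmannian (n m : ℕ) : Type :=
  {V : Submodule ℝ (Euc n) // Module.finrank ℝ V = m}

/-- The orthogonal projection `π_V : ℝⁿ → V ⊆ ℝⁿ`. -/
def projG {n m : ℕ} (V : Grassmannian n m) : Euc n →L[ℝ] Euc n :=
  (V.1.subtypeL).comp (V.1.orthogonalProjectionOnto)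

instance {n m : ℕ} : TopologicalSpace (Grassmannian n m) :=
  TopologicalSpace.induced projG inferInstance

instance {n m : ℕ} : MeasurableSpace (Grassmannian n m) := borel _

instance {n m : ℕ} : BorelSpace (Grassmannian n m) := ⟨rfl⟩

/-- The action of an orthogonal transformation on the Grassmannian. -/
def grMap {n m : ℕ} (g : Euc n ≃ₗᵢ[ℝ] Euc n) (V : Grassmannian n m) : Grassmannian n m :=
  ⟨V.1.map (g.toLinearEquiv : Euc n →ₗ[ℝ] Euc n), by
    rw [LinearEquiv.finrank_map_eq g.toLinearEquiv V.1]; exact V.2⟩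

/-- A measure on the Grassmannian is invariant under the action of `O(n)`. -/
def IsONInvariant {n m : ℕ} (γ : Measure (Grassmannian n m)) : Prop :=
  ∀ g : Euc n ≃ₗᵢ[ℝ] Euc n, Measure.map (grMap g) γ = γ

/-- `η_p(B) = ‖V ↦ H^m(π_V(B))‖_{L^p(γ)}`. -/
def etaP {n m : ℕ} (γ : Measure (Grassmannian n m)) (p : ℝ≥0∞) (B : Set (Euc n)) : ℝ≥0∞ :=
  lpNormENN γ p (fun V => μH[(m : ℝ)] (projG V '' B))

/-- Federer's integralgeometric measure `I^m_p`. -/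
def IGMeasure {n m : ℕ} (γ : Measure (Grassmannian n m)) (p : ℝ≥0∞) :
    Set (Euc n) → ℝ≥0∞ :=
  carath (etaP γ p)

/-- `μ_V(B) = ∫_V H^0(B ∩ π_V⁻¹(y)) dH^m(y)`. -/
def muV {n m : ℕ} (V : Grassmannian n m) (B : Set (Euc n)) : ℝ≥0∞ :=
  ∫⁻ y in (V.1 : Set (Euc n)), Measure.count (B ∩ projG V ⁻¹' {y}) ∂μH[(m : ℝ)]



/-- `ζ_p(B) = ‖V ↦ μ_V(B)‖_{L^p(γ)}` for the measures `μ_V`. -/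
def zetaGr {n m : ℕ} (γ : Measure (Grassmannian n m)) (p : ℝ≥0∞) (B : Set (Euc n)) : ℝ≥0∞ :=
  lpNormENN γ p (fun V => muV V B)

/-- The measure `𝓘^m_p` obtained from `ζ_p` via Carathéodory's construction. -/
def IGMeasureAlt {n m : ℕ} (γ : Measure (Grassmannian n m)) (p : ℝ≥0∞) :
    Set (Euc n) → ℝ≥0∞ :=
  carath (zetaGr γ p)


section AuxHelpers

variable {α : Type*} [MeasurableSpace α] {ν : Measure α}

lemma upperLintegral_mono' {f g : α → ℝ≥0∞} (h : ∀ a, f a ≤ g a) :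
    upperLintegral ν f ≤ upperLintegral ν g := by
  refine le_iInf fun G => le_iInf fun hG => le_iInf fun hfg => ?_
  exact iInf_le_of_le G (iInf_le_of_le hG (iInf_le_of_le (fun a => (h a).trans (hfg a)) le_rfl))

lemma exists_dominating {f : α → ℝ≥0∞} {c : ℝ≥0∞} (h : upperLintegral ν f < c) :
    ∃ g : α → ℝ≥0∞, Measurable g ∧ (∀ a, f a ≤ g a) ∧ ∫⁻ a, g a ∂ν < c := by
  by_contra hc
  push_neg at hc
  exact absurd (le_iInf fun g => le_iInf fun hg => le_iInf fun hfg => hc g hg hfg) (not_le.2 h)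

lemma upperLintegral_eq_zero_iff {f : α → ℝ≥0∞} :
    upperLintegral ν f = 0 ↔ f =ᵐ[ν] 0 := by
  constructor
  · intro h
    have hsel : ∀ k : ℕ, ∃ g : α → ℝ≥0∞, Measurable g ∧ (∀ a, f a ≤ g a) ∧
        ∫⁻ a, g a ∂ν < (((k : ℝ≥0∞) + 1))⁻¹ := by
      intro k
      apply exists_dominating
      rw [h]
      simp [ENNReal.inv_pos]
    choose g hgm hgf hgint using hsel
    set G : α → ℝ≥0∞ := fun a => ⨅ k, g k a with hG
    have hGm : Measurable G := Measurable.iInf hgm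
    have hGint : ∫⁻ a, G a ∂ν = 0 := by
      by_contra h0
      obtain ⟨k, hk⟩ := ENNReal.exists_inv_nat_lt h0
      have h1 : ∫⁻ a, G a ∂ν ≤ ∫⁻ a, g k a ∂ν := lintegral_mono fun a => iInf_le _ k
      have h2 : ((k : ℝ≥0∞))⁻¹ < ((k : ℝ≥0∞) + 1)⁻¹ := lt_of_lt_of_le hk (h1.trans (hgint k).le)
      exact absurd h2 (not_lt.2 (ENNReal.inv_le_inv.2 (le_add_of_nonneg_right zero_le)))
    have hG0 : G =ᵐ[ν] 0 := (lintegral_eq_zero_iff hGm).1 hGint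
    filter_upwards [hG0] with a ha
    have : f a ≤ G a := le_iInf fun k => hgf k a
    simpa using this.trans_eq ha
  · intro h
    have h0 : ν {a | ¬ f a = 0} = 0 := by
      have := ae_iff.1 h
      simpa using this
    obtain ⟨N, hNsub, hNm, hN0⟩ := exists_measurable_superset_of_null h0
    refine le_antisymm ?_ zero_le
    have hgm : Measurable (N.indicator (fun _ => (∞ : ℝ≥0∞))) :=
      Measurable.indicator measurable_const hNm
    have hdom : ∀ a, f a ≤ N.indicator (fun _ => (∞ : ℝ≥0∞)) a := by
      intro a
      by_cases ha : a ∈ N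
      · simp [Set.indicator_of_mem ha]
      · have : f a = 0 := by
          by_contra hfa
          exact ha (hNsub hfa)
        simp [this]
    have hint : ∫⁻ a, N.indicator (fun _ => (∞ : ℝ≥0∞)) a ∂ν = 0 := by
      rw [lintegral_indicator hNm]
      simp [hN0]
    exact iInf_le_of_le _ (iInf_le_of_le hgm (iInf_le_of_le hdom hint.le))

lemma upperLintegral_tsum_le (f : ℕ → α → ℝ≥0∞) :
    upperLintegral ν (fun a => ∑' i, f i a) ≤ ∑' i, upperLintegral ν (f i) := by
  set S := ∑' i, upperLintegral ν (f i) with hS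
  rcases eq_top_or_lt_top S with h | h
  · rw [h]; exact le_top
  refine ENNReal.le_of_forall_pos_le_add fun ε hε _ => ?_
  obtain ⟨ε', hε'pos, hε'sum⟩ := ENNReal.exists_pos_sum_of_countable
    (by exact_mod_cast hε.ne' : (ε : ℝ≥0∞) ≠ 0) ℕ
  have hsel : ∀ i, ∃ g : α → ℝ≥0∞, Measurable g ∧ (∀ a, f i a ≤ g a) ∧
      ∫⁻ a, g a ∂ν < upperLintegral ν (f i) + ε' i := by
    intro i
    apply exists_dominating
    exact ENNReal.lt_add_right (ne_top_of_le_ne_top h.ne (ENNReal.le_tsum i))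
      (by exact_mod_cast (hε'pos i).ne')
  choose g hgm hgf hgint using hsel
  have hstep : upperLintegral ν (fun a => ∑' i, f i a) ≤ ∫⁻ a, ∑' i, g i a ∂ν :=
    iInf_le_of_le _ (iInf_le_of_le (Measurable.ennreal_tsum hgm)
      (iInf_le_of_le (fun a => ENNReal.tsum_le_tsum fun i => hgf i a) le_rfl))
  refine hstep.trans ?_
  rw [lintegral_tsum fun i => (hgm i).aemeasurable]
  calc ∑' i, ∫⁻ a, g i a ∂ν ≤ ∑' i, (upperLintegral ν (f i) + ε' i) :=
        ENNReal.tsum_le_tsum fun i => (hgint i).le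
    _ = S + ∑' i, (ε' i : ℝ≥0∞) := ENNReal.tsum_add
    _ ≤ S + ε := add_le_add_right hε'sum.le S

lemma lintegral_le_lpNormENN_mul (hν : ν Set.univ ≠ ∞) {p : ℝ≥0∞} (hp : 1 ≤ p)
    {f : α → ℝ≥0∞} (hf : AEMeasurable f ν) :
    ∫⁻ a, f a ∂ν ≤ (ν Set.univ) ^ ((1 : ℝ) - 1 / p.toReal) * lpNormENN ν p f := by
  rcases eq_or_ne p ∞ with rfl | hptop
  · simp only [lpNormENN, if_pos rfl, ENNReal.toReal_top, div_zero, sub_zero, ENNReal.rpow_one]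
    calc ∫⁻ a, f a ∂ν ≤ ∫⁻ _, essSup f ν ∂ν := lintegral_mono_ae (ENNReal.ae_le_essSup f)
      _ = essSup f ν * ν Set.univ := lintegral_const _
      _ = ν Set.univ * essSup f ν := mul_comm _ _
  rcases eq_or_ne p 1 with rfl | hp1
  · simp [lpNormENN, ENNReal.toReal_one, ENNReal.rpow_one]
  · have hpe : 1 < p.toReal := by
      have := (ENNReal.toReal_lt_toReal ENNReal.one_ne_top hptop).2
        (lt_of_le_of_ne hp (Ne.symm hp1))
      simpa using this
    have hpq : p.toReal.HolderConjugate (Real.conjExponent p.toReal) :=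
      Real.HolderConjugate.conjExponent hpe
    have hone : AEMeasurable (fun _ : α => (1 : ℝ≥0∞)) ν := aemeasurable_const
    have hhold := ENNReal.lintegral_mul_le_Lp_mul_Lq ν hpq hf hone
    simp only [lpNormENN, if_neg hptop]
    have hq : 1 / Real.conjExponent p.toReal = 1 - 1 / p.toReal := by
      have := hpq.one_sub_inv
      rw [one_div, one_div, ← this]
    have hkey : (∫⁻ a, (1 : ℝ≥0∞) ^ Real.conjExponent p.toReal ∂ν) ^
        (1 / Real.conjExponent p.toReal) = (ν Set.univ) ^ ((1 : ℝ) - 1 / p.toReal) := by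
      simp only [ENNReal.one_rpow, lintegral_one]
      rw [hq]
    simp only [Pi.mul_apply, mul_one] at hhold
    calc ∫⁻ a, f a ∂ν
        ≤ (∫⁻ a, f a ^ p.toReal ∂ν) ^ (1 / p.toReal) *
          (∫⁻ a, (1 : ℝ≥0∞) ^ Real.conjExponent p.toReal ∂ν) ^
            (1 / Real.conjExponent p.toReal) := hhold
      _ = (ν Set.univ) ^ ((1 : ℝ) - 1 / p.toReal) *
          (∫⁻ a, f a ^ p.toReal ∂ν) ^ (1 / p.toReal) := by
        rw [hkey, mul_comm]

lemma lpNormENN_eq_zero {p : ℝ≥0∞} (hp : 1 ≤ p) {f : α → ℝ≥0∞} (hf : f =ᵐ[ν] 0) :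
    lpNormENN ν p f = 0 := by
  rcases eq_or_ne p ∞ with rfl | hptop
  · simp only [lpNormENN, if_pos rfl]
    rw [essSup_congr_ae hf]
    exact essSup_const_bot
  · have hp0 : 0 < p.toReal :=
      ENNReal.toReal_pos (fun h => by simp [h] at hp) hptop
    simp only [lpNormENN, if_neg hptop]
    have hz : (fun a => f a ^ p.toReal) =ᵐ[ν] 0 := by
      filter_upwards [hf] with a ha
      simp only [Pi.zero_apply] at ha ⊢
      rw [ha, ENNReal.zero_rpow_of_pos hp0]
    rw [lintegral_congr_ae hz]
    simp only [Pi.zero_apply, lintegral_zero]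
    exact ENNReal.zero_rpow_of_pos (by positivity)

variable {X : Type*} [EMetricSpace X] [MeasurableSpace X] [OpensMeasurableSpace X]
  [TopologicalSpace.SeparableSpace X] [Nonempty X]

lemma carath_eq_zero_iff (ζ : Set X → ℝ≥0∞) (E : Set X) :
    carath ζ E = 0 ↔ ∀ δ ε : ℝ≥0∞, 0 < δ → 0 < ε →
      ∃ G : ℕ → Set X, (∀ i, MeasurableSet (G i)) ∧ (E ⊆ ⋃ i, G i) ∧
        (∀ i, EMetric.diam (G i) ≤ δ) ∧ ∑' i, ζ (G i) ≤ ε := by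
  constructor
  · intro h δ ε hδ hε
    have hterm : (⨅ (G : ℕ → Set X) (_ : ∀ i, MeasurableSet (G i)) (_ : E ⊆ ⋃ i, G i)
        (_ : ∀ i, EMetric.diam (G i) ≤ δ), ∑' i, ζ (G i)) = 0 := by
      refine le_antisymm ?_ zero_le
      rw [← h]
      exact le_iSup₂ (f := fun (δ : ℝ≥0∞) (_ : 0 < δ) =>
        ⨅ (G : ℕ → Set X) (_ : ∀ i, MeasurableSet (G i)) (_ : E ⊆ ⋃ i, G i)
          (_ : ∀ i, EMetric.diam (G i) ≤ δ), ∑' i, ζ (G i)) δ hδ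
    by_contra hc
    push_neg at hc
    have : ε ≤ 0 := by
      rw [← hterm]
      exact le_iInf fun G => le_iInf fun h1 => le_iInf fun h2 => le_iInf fun h3 =>
        (hc G h1 h2 h3).le
    exact absurd this (not_le.2 hε)
  · intro h
    refine le_antisymm ?_ zero_le
    refine iSup₂_le fun δ hδ => ?_
    refine ENNReal.le_of_forall_pos_le_add fun ε hε _ => ?_
    obtain ⟨G, h1, h2, h3, h4⟩ := h δ ε hδ (by exact_mod_cast hε)
    calc (⨅ (G : ℕ → Set X) (_ : ∀ i, MeasurableSet (G i)) (_ : E ⊆ ⋃ i, G i)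
          (_ : ∀ i, EMetric.diam (G i) ≤ δ), ∑' i, ζ (G i)) ≤ ∑' i, ζ (G i) :=
        iInf_le_of_le G (iInf_le_of_le h1 (iInf_le_of_le h2 (iInf_le_of_le h3 le_rfl)))
      _ ≤ ε := h4
      _ ≤ 0 + ε := by rw [zero_add]

lemma carath_eq_zero_of_subsets (ζ : Set X → ℝ≥0∞) (E : Set X) (hE : MeasurableSet E)
    (hζ : ∀ B : Set X, MeasurableSet B → B ⊆ E → ζ B = 0) : carath ζ E = 0 := by
  rw [carath_eq_zero_iff]
  intro δ ε hδ hε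
  obtain ⟨u, hu⟩ := TopologicalSpace.exists_dense_seq X
  set r : ℝ≥0∞ := min δ 1 / 2 with hr
  have hmin : (0 : ℝ≥0∞) < min δ 1 := lt_min hδ one_pos
  have hr0 : 0 < r := ENNReal.div_pos hmin.ne' ENNReal.ofNat_ne_top
  have hGm : ∀ i, MeasurableSet (E ∩ EMetric.ball (u i) r) :=
    fun i => hE.inter EMetric.isOpen_ball.measurableSet
  refine ⟨fun i => E ∩ EMetric.ball (u i) r, hGm, ?_, ?_, ?_⟩
  · intro x hx
    obtain ⟨y, ⟨i, rfl⟩, hi⟩ := EMetric.mem_closure_iff.1 (hu x) r hr0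
    exact Set.mem_iUnion.2 ⟨i, hx, EMetric.mem_ball.2 hi⟩
  · intro i
    calc EMetric.diam (E ∩ EMetric.ball (u i) r) ≤ EMetric.diam (EMetric.ball (u i) r) :=
        EMetric.diam_mono inter_subset_right
      _ ≤ 2 * r := EMetric.diam_ball
      _ = min δ 1 := ENNReal.mul_div_cancel (by norm_num) ENNReal.ofNat_ne_top
      _ ≤ δ := min_le_left _ _
  · have hz : ∀ i, ζ (E ∩ EMetric.ball (u i) r) = 0 :=
      fun i => hζ _ (hGm i) inter_subset_left
    simp [hz]

end AuxHelpers

/-- Proposition 4.5: characterization of null sets of `𝓘̂_m`,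
`𝓘^m_1` and `𝓘^m_p`. -/
theorem genIGMeasure_null_iff
    {n l : ℕ} (hn : 1 ≤ n)
    (Λ : Set (Euc l)) (hΛo : IsOpen Λ) (hΛb : Bornology.IsBounded Λ)
    (μ : Euc l → Measure (Euc n)) (hμ : MeasurableFamily Λ μ) :
    (∀ A : Set (Euc n × Euc l), MeasurableSet A → A ⊆ Set.univ ×ˢ Λ →
      (hatIG Λ μ A = 0 ↔
        ∀ᵐ lam ∂(volume.restrict Λ), μ lam {x | (x, lam) ∈ A} = 0)) ∧
    (∀ B : Set (Euc n), MeasurableSet B →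
      (genIGMeasure Λ μ 1 B = 0 ↔ ∀ᵐ lam ∂(volume.restrict Λ), μ lam B = 0)) ∧
    (∀ p : ℝ≥0∞, 1 ≤ p → ∀ B : Set (Euc n), MeasurableSet B →
      (genIGMeasure Λ μ 1 B = 0 ↔ genIGMeasure Λ μ p B = 0)) := by
  set ν := volume.restrict Λ with hν
  have hνfin : ν Set.univ ≠ ∞ := by
    rw [Measure.restrict_apply_univ]
    exact hΛb.measure_lt_top.ne
  have zeta1 : ∀ B : Set (Euc n), zetaP Λ μ 1 B = ∫⁻ lam, μ lam B ∂ν := by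
    intro B
    simp [zetaP, lpNormENN, ENNReal.toReal_one, ENNReal.rpow_one, hν]
  -- Part 2 first, since part 3 uses it.
  have key2 : ∀ B : Set (Euc n), MeasurableSet B →
      (genIGMeasure Λ μ 1 B = 0 ↔ ∀ᵐ lam ∂ν, μ lam B = 0) := by
    intro B hB
    constructor
    · intro h
      have h0 : ∫⁻ lam, μ lam B ∂ν = 0 := by
        refine le_antisymm (ENNReal.le_of_forall_pos_le_add fun ε hε _ => ?_) zero_le
        obtain ⟨G, hGm, hGc, _, hGs⟩ := (carath_eq_zero_iff _ _).1 h 1 ε one_pos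
          (by exact_mod_cast hε)
        calc ∫⁻ lam, μ lam B ∂ν ≤ ∫⁻ lam, ∑' i, μ lam (G i) ∂ν :=
              lintegral_mono fun lam => (measure_mono hGc).trans (measure_iUnion_le _)
          _ = ∑' i, ∫⁻ lam, μ lam (G i) ∂ν := lintegral_tsum fun i => hμ _ (hGm i)
          _ = ∑' i, zetaP Λ μ 1 (G i) := by simp_rw [zeta1]
          _ ≤ ε := hGs
          _ ≤ 0 + ε := by rw [zero_add]
      exact (lintegral_eq_zero_iff' (hμ B hB)).1 h0
    · intro h
      refine carath_eq_zero_of_subsets _ _ hB fun B' hB'm hB'sub => ?_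
      have hz : (fun lam => μ lam B') =ᵐ[ν] 0 := by
        filter_upwards [h] with lam hl
        simp only [Pi.zero_apply]
        exact le_antisymm ((measure_mono hB'sub).trans hl.le) zero_le
      rw [zeta1, lintegral_congr_ae hz]
      simp
  refine ⟨?_, key2, ?_⟩
  · -- Part 1
    intro A hA _
    constructor
    · intro h
      have h0 : upperLintegral ν (fun lam => μ lam {x | (x, lam) ∈ A}) = 0 := by
        refine le_antisymm (ENNReal.le_of_forall_pos_le_add fun ε hε _ => ?_) zero_le
        obtain ⟨G, hGm, hGc, _, hGs⟩ := (carath_eq_zero_iff _ _).1 h 1 ε one_pos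
          (by exact_mod_cast hε)
        have hpt : ∀ lam, μ lam {x | (x, lam) ∈ A} ≤
            ∑' i, μ lam {x | (x, lam) ∈ G i} := by
          intro lam
          refine le_trans (measure_mono fun x hx => ?_) (measure_iUnion_le _)
          obtain ⟨i, hi⟩ := Set.mem_iUnion.1 (hGc hx)
          exact Set.mem_iUnion.2 ⟨i, hi⟩
        calc upperLintegral ν (fun lam => μ lam {x | (x, lam) ∈ A})
            ≤ upperLintegral ν (fun lam => ∑' i, μ lam {x | (x, lam) ∈ G i}) :=
              upperLintegral_mono' hpt
          _ ≤ ∑' i, upperLintegral ν (fun lam => μ lam {x | (x, lam) ∈ G i}) :=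
              upperLintegral_tsum_le _
          _ = ∑' i, zetaHat Λ μ (G i) := rfl
          _ ≤ ε := hGs
          _ ≤ 0 + ε := by rw [zero_add]
      exact upperLintegral_eq_zero_iff.1 h0
    · intro h
      refine carath_eq_zero_of_subsets _ _ hA fun B' hB'm hB'sub => ?_
      refine upperLintegral_eq_zero_iff.2 ?_
      filter_upwards [h] with lam hl
      have hsub : {x : Euc n | (x, lam) ∈ B'} ⊆ {x : Euc n | (x, lam) ∈ A} :=
        fun x hx => hB'sub hx
      simp only [Pi.zero_apply]
      exact le_antisymm ((measure_mono hsub).trans hl.le) zero_le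
  · -- Part 3
    intro p hp B hB
    constructor
    · intro h1
      have hae := (key2 B hB).1 h1
      refine carath_eq_zero_of_subsets _ _ hB fun B' hB'm hB'sub => ?_
      refine lpNormENN_eq_zero hp ?_
      filter_upwards [hae] with lam hl
      simp only [Pi.zero_apply]
      exact le_antisymm ((measure_mono hB'sub).trans hl.le) zero_le
    · intro hp0
      rw [show genIGMeasure Λ μ 1 B = carath (zetaP Λ μ 1) B from rfl, carath_eq_zero_iff]
      intro δ ε hδ hε
      set C : ℝ≥0∞ := (ν Set.univ) ^ ((1 : ℝ) - 1 / p.toReal) with hC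
      have hexp : (0 : ℝ) ≤ 1 - 1 / p.toReal := by
        rcases eq_or_ne p ∞ with rfl | hptop
        · simp
        · have h1 : (1 : ℝ) ≤ p.toReal := by
            have := (ENNReal.toReal_le_toReal ENNReal.one_ne_top hptop).2 hp
            simpa using this
          have : 1 / p.toReal ≤ 1 := by
            rw [div_le_one (by linarith)]
            exact h1
          linarith
      have hCtop : C ≠ ∞ := ENNReal.rpow_ne_top_of_nonneg hexp hνfin
      obtain ⟨G, h1, h2, h3, h4⟩ := (carath_eq_zero_iff _ _).1 hp0 δ (ε / C) hδ
        (ENNReal.div_pos hε.ne' hCtop)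
      refine ⟨G, h1, h2, h3, ?_⟩
      have hholder : ∀ i, zetaP Λ μ 1 (G i) ≤ C * zetaP Λ μ p (G i) := by
        intro i
        rw [zeta1]
        exact lintegral_le_lpNormENN_mul hνfin hp (hμ _ (h1 i))
      calc ∑' i, zetaP Λ μ 1 (G i) ≤ ∑' i, C * zetaP Λ μ p (G i) :=
            ENNReal.tsum_le_tsum hholder
        _ = C * ∑' i, zetaP Λ μ p (G i) := ENNReal.tsum_mul_left
        _ ≤ C * (ε / C) := mul_le_mul_right h4 C
        _ ≤ ε := ENNReal.mul_div_le

end Slicing
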